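/- arXiv:1811.03609 — 3 statements merged into one kernel-verified Lean document; each statement's English description precedes it below -/
import Mathlib

section
/- Let k be a natural number, κ : Fin k → ℝ with κ i > 0 for every i, and let W > 0 and δ > 0 be real numbers. Then there exists κ′ : Fin k → ℚ such that, writing w(v) = ∑_i κ i · v i and w_p(v) = ∑_i (κ′ i : ℝ) · v i for v : Fin k → ℕ, the following hold: (a) for every v with w(v) ≤ W one has |w_p(v) − w(v)| < δ; (b) for all v₁ ≠ v₂ with w(v₁) ≤ W and w(v₂) ≤ W one has w_p(v₁) ≠ w_p(v₂); (c) for every v with w(v) ≥ W + 1 one has w_p(v) ≥ W + 1 − δ. -/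
open Finset

lemma sep_digits_inj : ∀ (k B : ℕ) (f g : Fin k → ℕ), (∀ i, f i < B) → (∀ i, g i < B) →
    (∑ i, f i * B ^ (i : ℕ)) = ∑ i, g i * B ^ (i : ℕ) → f = g := by
  intro k
  induction k with
  | zero => intro B f g _ _ _; ext i; exact i.elim0
  | succ n ih =>
    intro B f g hf hg h
    have hB : 0 < B := Nat.pos_of_ne_zero (by rintro rfl; exact Nat.not_lt_zero _ (hf 0))
    rw [Fin.sum_univ_succ, Fin.sum_univ_succ] at h
    simp only [Fin.val_zero, pow_zero, mul_one, Fin.val_succ, pow_succ'] at h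
    have h' : f 0 + B * ∑ i : Fin n, f i.succ * B ^ (i : ℕ)
        = g 0 + B * ∑ i : Fin n, g i.succ * B ^ (i : ℕ) := by
      rw [Finset.mul_sum, Finset.mul_sum] at *
      convert h using 2 <;> [skip; skip] <;> ring_nf
    have h0 : f 0 = g 0 := by
      have := congrArg (· % B) h'
      simpa [Nat.add_mul_mod_self_left, Nat.mod_eq_of_lt (hf 0), Nat.mod_eq_of_lt (hg 0)] using this
    have hrest : (fun i : Fin n => f i.succ) = fun i => g i.succ := by
      apply ih B _ _ (fun i => hf i.succ) (fun i => hg i.succ)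
      have := Nat.add_left_cancel (h0 ▸ h')
      exact Nat.eq_of_mul_eq_mul_left hB this
    ext i
    refine Fin.cases h0 (fun j => congrFun hrest j) i

lemma sep_key (M z y : ℤ) (hy : y ≠ 0) (hyM : |y| < M) : M * z + y ≠ 0 := by
  intro h
  rcases eq_or_ne z 0 with rfl | hz
  · simp at h; exact hy h
  · have hM : 0 < M := lt_of_le_of_lt (abs_nonneg y) hyM
    have : |y| = M * |z| := by
      have : y = -(M * z) := by linarith
      rw [this, abs_neg, abs_mul, abs_of_pos hM]
    have h1 : (1 : ℤ) ≤ |z| := Int.one_le_abs hz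
    nlinarith

/-- Section 3.4 ("Separating actions"): the divisorial weights `κ i > 0` can be
perturbed to rational numbers `κ' i` whose weighted winding numbers
`w_p v = ∑ i, κ' i * v i` are δ-close to `w v = ∑ i, κ i * v i` on the set of
multiplicity vectors of weight at most `W`, are pairwise distinct there, and do
not fall below `W + 1 − δ` on vectors of weight at least `W + 1`. -/
theorem separating_actions (k : ℕ) (κ : Fin k → ℝ) (hκ : ∀ i, 0 < κ i)
    (W δ : ℝ) (hW : 0 < W) (hδ : 0 < δ) :
    ∃ κ' : Fin k → ℚ,
      (∀ v : Fin k → ℕ, (∑ i, κ i * (v i : ℝ)) ≤ W →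
        |(∑ i, (κ' i : ℝ) * (v i : ℝ)) - ∑ i, κ i * (v i : ℝ)| < δ) ∧
      (∀ v₁ v₂ : Fin k → ℕ, v₁ ≠ v₂ →
        (∑ i, κ i * (v₁ i : ℝ)) ≤ W → (∑ i, κ i * (v₂ i : ℝ)) ≤ W →
        (∑ i, (κ' i : ℝ) * (v₁ i : ℝ)) ≠ ∑ i, (κ' i : ℝ) * (v₂ i : ℝ)) ∧
      (∀ v : Fin k → ℕ, W + 1 ≤ ∑ i, κ i * (v i : ℝ) →
        W + 1 - δ ≤ ∑ i, (κ' i : ℝ) * (v i : ℝ)) := by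
  rcases Nat.eq_zero_or_pos k with hk | hk
  · subst hk
    refine ⟨fun i => 0, ?_, ?_, ?_⟩
    · intro v _; simpa using hδ
    · intro v₁ v₂ h _ _
      exact absurd (funext fun i => i.elim0) h
    · intro v hv
      simp only [Finset.univ_eq_empty, Finset.sum_empty] at hv ⊢
      linarith
  -- main case k ≥ 1
  set N : ℕ := ⌈∑ i, W / κ i⌉₊ with hNdef
  have hNbd : ∀ j, W / κ j ≤ (N : ℝ) := by
    intro j
    refine le_trans ?_ (Nat.le_ceil _)
    exact Finset.single_le_sum (fun i _ => le_of_lt (div_pos hW (hκ i))) (Finset.mem_univ j)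
  have hN1 : 1 ≤ N := by
    have h0 : (0 : ℝ) < ∑ i, W / κ i :=
      lt_of_lt_of_le (div_pos hW (hκ ⟨0, hk⟩))
        (Finset.single_le_sum (fun i _ => le_of_lt (div_pos hW (hκ i))) (Finset.mem_univ (⟨0, hk⟩ : Fin k)))
    exact Nat.ceil_pos.mpr h0
  set B : ℕ := N + 1 with hBdef
  set D : ℕ := ⌈2 * k * N / δ⌉₊ + 1 with hDdef
  have hDpos : (0 : ℝ) < D := by positivity
  have hD : (2 * k * N : ℝ) / δ < D := by
    calc (2 * k * N : ℝ) / δ ≤ ⌈2 * k * N / δ⌉₊ := Nat.le_ceil _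
    _ < D := by rw [hDdef]; exact_mod_cast Nat.lt_succ_self _
  set M : ℕ := k * N * B ^ k + 1 with hMdef
  have hMpos : (0 : ℝ) < M := by positivity
  have hBM : (B : ℝ) ^ k ≤ M := by
    have h1 : (1:ℝ) ≤ k := by exact_mod_cast hk
    have h2 : (1:ℝ) ≤ N := by exact_mod_cast hN1
    have h3 : (0:ℝ) < (B:ℝ)^k := by positivity
    have : (1:ℝ) * 1 * (B:ℝ)^k ≤ (k:ℝ) * N * (B:ℝ)^k := by gcongr
    have hMeq : (M:ℝ) = (k:ℝ) * N * (B:ℝ)^k + 1 := by rw [hMdef]; push_cast; ring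
    rw [hMeq]; nlinarith
  set a : Fin k → ℤ := fun i => (⌊κ i * D⌋ + 1) * M + B ^ (i : ℕ) with hadef
  have hDMpos : (0 : ℝ) < (D : ℝ) * M := by positivity
  have hacast : ∀ i : Fin k, (a i : ℝ) = ((⌊κ i * D⌋ : ℝ) + 1) * M + (B : ℝ) ^ (i : ℕ) := by
    intro i; rw [hadef]; push_cast; ring
  have hcast1 : ∀ i : Fin k, (((a i : ℚ) / ((D : ℚ) * M) : ℚ) : ℝ) = (a i : ℝ) / ((D : ℝ) * M) := by
    intro i; push_cast; ring
  have hlow : ∀ i, κ i < (a i : ℝ) / ((D : ℝ) * M) := by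
    intro i
    rw [lt_div_iff₀ hDMpos, hacast i]
    have hf := Int.lt_floor_add_one (κ i * D)
    have hBi : (0 : ℝ) < (B : ℝ) ^ (i : ℕ) := by positivity
    nlinarith
  have hup : ∀ i, (a i : ℝ) / ((D : ℝ) * M) ≤ κ i + 2 / D := by
    intro i
    rw [div_le_iff₀ hDMpos, hacast i]
    have hf : ((⌊κ i * D⌋ : ℝ)) ≤ κ i * D := Int.floor_le _
    have hBi : (B : ℝ) ^ (i : ℕ) ≤ (B : ℝ) ^ k :=
      pow_le_pow_right₀ (by exact_mod_cast Nat.le_add_left 1 N) (le_of_lt i.isLt)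
    have hrhs : (κ i + 2 / ↑D) * (↑D * ↑M) = κ i * D * M + 2 * M := by
      field_simp
    rw [hrhs]
    nlinarith [hBM]
  have hbox : ∀ v : Fin k → ℕ, (∑ i, κ i * (v i : ℝ)) ≤ W → ∀ j, v j ≤ N := by
    intro v hv j
    have hterms : ∀ i ∈ Finset.univ, (0 : ℝ) ≤ κ i * (v i : ℝ) :=
      fun i _ => mul_nonneg (hκ i).le (Nat.cast_nonneg _)
    have h1 : κ j * (v j : ℝ) ≤ W :=
      le_trans (Finset.single_le_sum hterms (Finset.mem_univ j)) hv
    have h2 : (v j : ℝ) ≤ W / κ j := (le_div_iff₀ (hκ j)).mpr (by linarith [mul_comm (κ j) ((v j : ℕ) : ℝ)])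
    exact_mod_cast h2.trans (hNbd j)
  have hform : ∀ v : Fin k → ℕ,
      (∑ i, (a i : ℝ) / ((D : ℝ) * M) * (v i : ℝ)) = (∑ i, (a i : ℝ) * (v i : ℝ)) / ((D : ℝ) * M) := by
    intro v
    rw [Finset.sum_div]
    exact Finset.sum_congr rfl fun i _ => by ring
  refine ⟨fun i => (a i : ℚ) / ((D : ℚ) * M), ?_, ?_, ?_⟩
  · -- (a) closeness
    intro v hv
    simp only [hcast1]
    have hvN := hbox v hv
    have hsub : (∑ i, (a i : ℝ) / ((D : ℝ) * M) * (v i : ℝ)) - ∑ i, κ i * (v i : ℝ)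
        = ∑ i, ((a i : ℝ) / ((D : ℝ) * M) - κ i) * (v i : ℝ) := by
      rw [← Finset.sum_sub_distrib]
      exact Finset.sum_congr rfl fun i _ => by ring
    rw [hsub, abs_of_nonneg]
    · calc ∑ i, ((a i : ℝ) / ((D : ℝ) * M) - κ i) * (v i : ℝ)
          ≤ ∑ _i : Fin k, (2 / (D : ℝ)) * (N : ℝ) := by
            refine Finset.sum_le_sum fun i _ => ?_
            have h1 : (a i : ℝ) / ((D : ℝ) * M) - κ i ≤ 2 / D := by linarith [hup i]
            have h2 : (v i : ℝ) ≤ N := by exact_mod_cast hvN i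
            have h3 : (0 : ℝ) ≤ (v i : ℝ) := Nat.cast_nonneg _
            have h4 : (0 : ℝ) ≤ (a i : ℝ) / ((D : ℝ) * M) - κ i := by linarith [hlow i]
            nlinarith
      _ = 2 * k * N / D := by
            rw [Finset.sum_const, Finset.card_univ, Fintype.card_fin, nsmul_eq_mul]
            ring
      _ < δ := by
            rw [div_lt_iff₀ hDpos]
            have := (div_lt_iff₀ hδ).mp hD
            nlinarith
    · refine Finset.sum_nonneg fun i _ => ?_
      have h4 : (0 : ℝ) ≤ (a i : ℝ) / ((D : ℝ) * M) - κ i := by linarith [hlow i]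
      have h3 : (0 : ℝ) ≤ (v i : ℝ) := Nat.cast_nonneg _
      positivity
  · -- (b) separation
    intro v₁ v₂ hne h1 h2 heq
    have hb1 := hbox v₁ h1
    have hb2 := hbox v₂ h2
    simp only [hcast1] at heq
    rw [hform, hform] at heq
    have hR : (∑ i, (a i : ℝ) * (v₁ i : ℝ)) = ∑ i, (a i : ℝ) * (v₂ i : ℝ) := by
      rw [div_eq_div_iff (ne_of_gt hDMpos) (ne_of_gt hDMpos)] at heq
      exact mul_right_cancel₀ (ne_of_gt hDMpos) heq
    have hZ : (∑ i, a i * (v₁ i : ℤ)) = ∑ i, a i * (v₂ i : ℤ) := by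
      have : ((∑ i, a i * (v₁ i : ℤ) : ℤ) : ℝ) = ((∑ i, a i * (v₂ i : ℤ) : ℤ) : ℝ) := by
        push_cast
        exact hR
      exact_mod_cast this
    set z : ℤ := ∑ i, (⌊κ i * D⌋ + 1) * ((v₁ i : ℤ) - (v₂ i : ℤ)) with hzdef
    set y : ℤ := ∑ i : Fin k, (B : ℤ) ^ (i : ℕ) * ((v₁ i : ℤ) - (v₂ i : ℤ)) with hydef
    have hMzy : (M : ℤ) * z + y = 0 := by
      have heq2 : (M : ℤ) * z + y = (∑ i, a i * (v₁ i : ℤ)) - ∑ i, a i * (v₂ i : ℤ) := by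
        rw [hzdef, hydef, Finset.mul_sum, ← Finset.sum_add_distrib, ← Finset.sum_sub_distrib]
        refine Finset.sum_congr rfl fun i _ => ?_
        simp only [hadef]
        ring
      rw [heq2, hZ, sub_self]
    have hy0 : y ≠ 0 := by
      intro hy
      apply hne
      have hyz : (∑ i : Fin k, (B : ℤ) ^ (i : ℕ) * (v₁ i : ℤ))
          = ∑ i : Fin k, (B : ℤ) ^ (i : ℕ) * (v₂ i : ℤ) := by
        have hsplit : (∑ i : Fin k, (B : ℤ) ^ (i : ℕ) * (v₁ i : ℤ))
            - (∑ i : Fin k, (B : ℤ) ^ (i : ℕ) * (v₂ i : ℤ)) = 0 := by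
          rw [← Finset.sum_sub_distrib]
          rw [hydef] at hy
          simpa [mul_sub] using hy
        linarith
      have hnat : (∑ i, v₁ i * B ^ (i : ℕ)) = ∑ i, v₂ i * B ^ (i : ℕ) := by
        have hc : ((∑ i, v₁ i * B ^ (i : ℕ) : ℕ) : ℤ) = ((∑ i, v₂ i * B ^ (i : ℕ) : ℕ) : ℤ) := by
          push_cast
          calc ∑ i : Fin k, (v₁ i : ℤ) * (B : ℤ) ^ (i : ℕ)
              = ∑ i : Fin k, (B : ℤ) ^ (i : ℕ) * (v₁ i : ℤ) :=
                Finset.sum_congr rfl fun i _ => mul_comm _ _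
          _ = ∑ i : Fin k, (B : ℤ) ^ (i : ℕ) * (v₂ i : ℤ) := hyz
          _ = ∑ i : Fin k, (v₂ i : ℤ) * (B : ℤ) ^ (i : ℕ) :=
                Finset.sum_congr rfl fun i _ => mul_comm _ _
        exact_mod_cast hc
      exact sep_digits_inj k B v₁ v₂ (fun i => Nat.lt_succ_of_le (hb1 i))
        (fun i => Nat.lt_succ_of_le (hb2 i)) hnat
    have hyM : |y| < (M : ℤ) := by
      have habs : |y| ≤ ∑ _i : Fin k, (B : ℤ) ^ k * (N : ℤ) := by
        refine le_trans (Finset.abs_sum_le_sum_abs _ _) (Finset.sum_le_sum fun i _ => ?_)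
        rw [abs_mul]
        have hBp : (0 : ℤ) ≤ (B : ℤ) ^ (i : ℕ) := by positivity
        have e1 : |(B : ℤ) ^ (i : ℕ)| = (B : ℤ) ^ (i : ℕ) := abs_of_nonneg hBp
        have e2 : (B : ℤ) ^ (i : ℕ) ≤ (B : ℤ) ^ k :=
          pow_le_pow_right₀ (by exact_mod_cast Nat.le_add_left 1 N) (le_of_lt i.isLt)
        have e3 : |(v₁ i : ℤ) - (v₂ i : ℤ)| ≤ (N : ℤ) := by
          have hv1 : (v₁ i : ℤ) ≤ N := by exact_mod_cast hb1 i
          have hv2 : (v₂ i : ℤ) ≤ N := by exact_mod_cast hb2 i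
          have h01 : (0 : ℤ) ≤ (v₁ i : ℤ) := Int.ofNat_nonneg _
          have h02 : (0 : ℤ) ≤ (v₂ i : ℤ) := Int.ofNat_nonneg _
          rw [abs_sub_le_iff]
          exact ⟨by omega, by omega⟩
        have h0 : (0 : ℤ) ≤ |(v₁ i : ℤ) - (v₂ i : ℤ)| := abs_nonneg _
        rw [e1]
        exact mul_le_mul e2 e3 h0 (by positivity)
      have hsum : (∑ _i : Fin k, (B : ℤ) ^ k * (N : ℤ)) = (k : ℤ) * ((B : ℤ) ^ k * N) := by
        rw [Finset.sum_const, Finset.card_univ, Fintype.card_fin, nsmul_eq_mul]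
      have hMcast : (M : ℤ) = (k : ℤ) * N * (B : ℤ) ^ k + 1 := by rw [hMdef]; push_cast; ring
      rw [hMcast]
      calc |y| ≤ (k : ℤ) * ((B : ℤ) ^ k * N) := by rw [← hsum]; exact habs
      _ < (k : ℤ) * N * (B : ℤ) ^ k + 1 := by nlinarith
    exact sep_key (M : ℤ) z y hy0 hyM hMzy
  · -- (c) lower bound above the window
    intro v hv
    simp only [hcast1]
    have hle : (∑ i, κ i * (v i : ℝ)) ≤ ∑ i, (a i : ℝ) / ((D : ℝ) * M) * (v i : ℝ) := by
      refine Finset.sum_le_sum fun i _ => ?_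
      exact mul_le_mul_of_nonneg_right (hlow i).le (Nat.cast_nonneg _)
    linarith
end

section
/- Let g : ℝ × ℝ → ℂ be twice continuously differentiable (ContDiff ℝ 2 on the product). Assume that g(q, 0) = 0 and g(q, −q) = 0 for every q ∈ ℝ. Then the function q ↦ (deriv (fun y => g (q, y)) 0) / q tends, as q → 0 within {q : q ≠ 0}, to (1/2) · iteratedDeriv 2 (fun y => g (0, y)) 0, i.e. to one half of the second derivative of y ↦ g(0, y) at y = 0. -/
open Filter

private theorem hasDerivAt_comp_line {E F : Type*} [NormedAddCommGroup E] [NormedSpace ℝ E]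
    [NormedAddCommGroup F] [NormedSpace ℝ F] {f : E → F} {D : E →L[ℝ] F} {c : ℝ → E} {v : E}
    {t : ℝ} (hf : HasFDerivAt f D (c t)) (hc : HasDerivAt c v t) :
    HasDerivAt (fun s => f (c s)) (D v) t :=
  hf.comp_hasDerivAt t hc

/-- Analytic core of case (i) of Lemma 3.7 (lem:evalKN): if `g : ℝ × ℝ → ℂ` is C²
with `g (q, 0) = 0` and `g (q, −q) = 0` for all `q`, then the first derivative
in `y` at `0`, divided by `q`, tends to half the second derivative of
`y ↦ g (0, y)` at `0` as `q → 0`, `q ≠ 0`. -/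
theorem colliding_zeros_limit (g : ℝ × ℝ → ℂ) (hg : ContDiff ℝ 2 g)
    (h0 : ∀ q : ℝ, g (q, 0) = 0) (h1 : ∀ q : ℝ, g (q, -q) = 0) :
    Tendsto (fun q : ℝ => (deriv (fun y : ℝ => g (q, y)) 0) / (q : ℂ))
      (nhdsWithin 0 {q : ℝ | q ≠ 0})
      (nhds ((1 / 2) * iteratedDeriv 2 (fun y : ℝ => g (0, y)) 0)) := by
  have hgd : Differentiable ℝ g := hg.differentiable (by norm_num)
  set A := fderiv ℝ g with hAdef
  have hA : ContDiff ℝ 1 A := hg.fderiv_right (le_refl 2)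
  have hAd : Differentiable ℝ A := hA.differentiable one_ne_zero
  set B := fderiv ℝ A (0, 0) with hBdef
  -- lines
  have hline1 : ∀ q : ℝ, HasDerivAt (fun q : ℝ => ((q, 0) : ℝ × ℝ)) (1, 0) q :=
    fun q => HasDerivAt.prodMk (hasDerivAt_id' q) (hasDerivAt_const q 0)
  have hline2 : ∀ q : ℝ, HasDerivAt (fun q : ℝ => ((q, -q) : ℝ × ℝ)) (1, -1) q :=
    fun q => HasDerivAt.prodMk (hasDerivAt_id' q) (HasDerivAt.neg (hasDerivAt_id' q))
  -- first order constraints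
  have hu : ∀ q : ℝ, A (q, 0) (1, 0) = 0 := by
    intro q
    have hder : HasDerivAt (fun q : ℝ => g (q, 0)) (A (q, 0) (1, 0)) q :=
      hasDerivAt_comp_line (hgd (q, 0)).hasFDerivAt (hline1 q)
    have hconst : HasDerivAt (fun q : ℝ => g (q, 0)) 0 q :=
      (hasDerivAt_const q (0 : ℂ)).congr_of_eventuallyEq
        (Filter.Eventually.of_forall fun x => h0 x)
    exact hder.unique hconst
  have hv : ∀ q : ℝ, A (q, -q) (1, -1) = 0 := by
    intro q
    have hder : HasDerivAt (fun q : ℝ => g (q, -q)) (A (q, -q) (1, -1)) q :=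
      hasDerivAt_comp_line (hgd (q, -q)).hasFDerivAt (hline2 q)
    have hconst : HasDerivAt (fun q : ℝ => g (q, -q)) 0 q :=
      (hasDerivAt_const q (0 : ℂ)).congr_of_eventuallyEq
        (Filter.Eventually.of_forall fun x => h1 x)
    exact hder.unique hconst
  -- F(0) = 0
  have hF0 : A (0, 0) (0, 1) = 0 := by
    have e : ((0 : ℝ), (1 : ℝ)) = ((1, 0) : ℝ × ℝ) - (1, -1) := by
      simp [Prod.ext_iff]
    have hv0 : A (0, 0) (1, -1) = 0 := by simpa using hv 0
    rw [e, map_sub, hu 0, hv0, sub_zero]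
  -- second order constraints
  have hBu : B (1, 0) (1, 0) = 0 := by
    have hder : HasDerivAt (fun q : ℝ => A (q, 0) (1, 0)) (B (1, 0) (1, 0)) 0 := by
      have h1' : HasDerivAt (fun q : ℝ => A (q, 0)) (B (1, 0)) 0 :=
        hasDerivAt_comp_line (hAd (0, 0)).hasFDerivAt (hline1 0)
      simpa using h1'.clm_apply (hasDerivAt_const 0 ((1 : ℝ), (0 : ℝ)))
    have hconst : HasDerivAt (fun q : ℝ => A (q, 0) (1, 0)) 0 0 :=
      (hasDerivAt_const 0 (0 : ℂ)).congr_of_eventuallyEq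
        (Filter.Eventually.of_forall fun x => hu x)
    exact hder.unique hconst
  have hBv : B (1, -1) (1, -1) = 0 := by
    have hfd : HasFDerivAt A B ((0 : ℝ), -(0 : ℝ)) := by
      simpa using (hAd (0, 0)).hasFDerivAt
    have hder : HasDerivAt (fun q : ℝ => A (q, -q) (1, -1)) (B (1, -1) (1, -1)) 0 := by
      have h1' : HasDerivAt (fun q : ℝ => A (q, -q)) (B (1, -1)) 0 :=
        hasDerivAt_comp_line hfd (hline2 0)
      simpa using h1'.clm_apply (hasDerivAt_const 0 ((1 : ℝ), (-1 : ℝ)))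
    have hconst : HasDerivAt (fun q : ℝ => A (q, -q) (1, -1)) 0 0 :=
      (hasDerivAt_const 0 (0 : ℂ)).congr_of_eventuallyEq
        (Filter.Eventually.of_forall fun x => hv x)
    exact hder.unique hconst
  -- symmetry of the second derivative
  have hsymm : B (1, 0) (0, 1) = B (0, 1) (1, 0) :=
    second_derivative_symmetric (fun y => (hgd y).hasFDerivAt)
      (hAd (0, 0)).hasFDerivAt (1, 0) (0, 1)
  -- key identity
  have hkey : B (1, 0) (0, 1) = (1 / 2 : ℂ) * B (0, 1) (0, 1) := by
    have e : ((1 : ℝ), (-1 : ℝ)) = ((1, 0) : ℝ × ℝ) - (0, 1) := by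
      simp [Prod.ext_iff]
    rw [e] at hBv
    simp only [map_sub, ContinuousLinearMap.sub_apply] at hBv
    linear_combination (-(1 : ℂ) / 2) * hBv + (1 / 2 : ℂ) * hBu + (1 / 2 : ℂ) * hsymm
  -- derivative of q ↦ ∂₂ g (q, 0)
  have hF : HasDerivAt (fun q : ℝ => A (q, 0) (0, 1)) (B (1, 0) (0, 1)) 0 := by
    have h1' : HasDerivAt (fun q : ℝ => A (q, 0)) (B (1, 0)) 0 :=
      hasDerivAt_comp_line (hAd (0, 0)).hasFDerivAt (hline1 0)
    simpa using h1'.clm_apply (hasDerivAt_const 0 ((0 : ℝ), (1 : ℝ)))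
  -- deriv of the slice
  have hslice : ∀ p : ℝ × ℝ, HasDerivAt (fun y : ℝ => g (p.1, y)) (A (p.1, p.2) (0, 1)) p.2 :=
    fun p => hasDerivAt_comp_line (hgd (p.1, p.2)).hasFDerivAt
      (HasDerivAt.prodMk (hasDerivAt_const p.2 p.1) (hasDerivAt_id' p.2))
  have hderiv_eq : ∀ q : ℝ, deriv (fun y : ℝ => g (q, y)) 0 = A (q, 0) (0, 1) :=
    fun q => (hslice (q, 0)).deriv
  -- iterated derivative
  have hit : iteratedDeriv 2 (fun y : ℝ => g (0, y)) 0 = B (0, 1) (0, 1) := by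
    rw [iteratedDeriv_succ, iteratedDeriv_one]
    have hd1 : deriv (fun y : ℝ => g (0, y)) = fun y : ℝ => A (0, y) (0, 1) :=
      funext fun y => (hslice (0, y)).deriv
    rw [hd1]
    have h1' : HasDerivAt (fun y : ℝ => A (0, y)) (B (0, 1)) 0 :=
      hasDerivAt_comp_line (hAd (0, 0)).hasFDerivAt
        (HasDerivAt.prodMk (hasDerivAt_const 0 (0 : ℝ)) (hasDerivAt_id' 0))
    have := h1'.clm_apply (hasDerivAt_const 0 ((0 : ℝ), (1 : ℝ)))
    simpa using this.deriv
  rw [hit, ← hkey]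
  have hsl := hasDerivAt_iff_tendsto_slope.mp hF
  refine hsl.congr' ?_
  refine eventually_nhdsWithin_of_forall fun q hq => ?_
  have hq' : q ≠ 0 := hq
  show slope (fun q : ℝ => A (q, 0) (0, 1)) 0 q = deriv (fun y : ℝ => g (q, y)) 0 / q
  rw [hderiv_eq q]
  simp [slope, hF0, Complex.real_smul, div_eq_inv_mul, Complex.ofReal_inv]
end

section
/- Let m ≥ 1 be a natural number and let g : ℝ × ℝ → ℂ be of class C^{m+2} (ContDiff ℝ (m + 2) on the product). Assume that for every q ∈ ℝ: g(q, 0) = 0, and iteratedDeriv j (fun y => g (q, y)) (−q) = 0 for every natural number j with j ≤ m − 1 (so y ↦ g(q, y) vanishes to order at least m at y = −q). Then the function q ↦ (iteratedDeriv m (fun y => g (q, y)) (−q)) / q tends, as q → 0 within {q : q ≠ 0}, to −(1/(m+1)) · iteratedDeriv (m + 1) (fun y => g (0, y)) 0. -/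
open Filter

open Set in
/-- Partial derivative in the second variable. -/
noncomputable def pdy (f : ℝ × ℝ → ℂ) : ℝ × ℝ → ℂ := fun p => fderiv ℝ f p (0, 1)

lemma contDiff_pdy {n : ℕ} {f : ℝ × ℝ → ℂ} (hf : ContDiff ℝ (n + 1 : ℕ) f) :
    ContDiff ℝ n (pdy f) := by
  have h1 : ContDiff ℝ n (fderiv ℝ f) := hf.fderiv_right (by exact_mod_cast le_refl (n + 1))
  exact (ContinuousLinearMap.apply ℝ ℂ ((0 : ℝ), (1 : ℝ))).contDiff.comp h1

lemma contDiff_pdy_iterate (j : ℕ) {n : ℕ} {f : ℝ × ℝ → ℂ}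
    (hf : ContDiff ℝ (n + j : ℕ) f) : ContDiff ℝ n (pdy^[j] f) := by
  induction j generalizing f with
  | zero => simpa using hf
  | succ j ih =>
      rw [Function.iterate_succ_apply]
      exact ih (contDiff_pdy (n := n + j) (by exact_mod_cast hf))

lemma deriv_slice {f : ℝ × ℝ → ℂ} (hf : Differentiable ℝ f) (q y : ℝ) :
    deriv (fun y : ℝ => f (q, y)) y = pdy f (q, y) := by
  have h := (hf (q, y)).hasFDerivAt.comp_hasDerivAt y
    ((hasDerivAt_const y q).prodMk (hasDerivAt_id y))
  exact h.deriv

lemma iteratedDeriv_slice (j : ℕ) {f : ℝ × ℝ → ℂ} (hf : ContDiff ℝ (j : ℕ) f) (q y : ℝ) :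
    iteratedDeriv j (fun y : ℝ => f (q, y)) y = pdy^[j] f (q, y) := by
  induction j generalizing f with
  | zero => simp
  | succ j ih =>
      rw [iteratedDeriv_succ']
      have hdiff : Differentiable ℝ f :=
        hf.differentiable (by simp)
      have hd : deriv (fun y : ℝ => f (q, y)) = fun y : ℝ => pdy f (q, y) :=
        funext fun y' => deriv_slice hdiff q y'
      rw [hd, ih (contDiff_pdy (n := j) hf), ← Function.iterate_succ_apply]

lemma iteratedDerivWithin_eq_of_contDiff {f : ℝ → ℂ} {N : ℕ} (hf : ContDiff ℝ (N : ℕ) f)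
    {s : Set ℝ} (hs : UniqueDiffOn ℝ s) {x : ℝ} (hx : x ∈ s) {k : ℕ} (hk : k ≤ N) :
    iteratedDerivWithin k f s x = iteratedDeriv k f x := by
  have H : HasFTaylorSeriesUpTo (N : ℕ∞) f (ftaylorSeries ℝ f) :=
    contDiff_iff_ftaylorSeries.mp (by exact_mod_cast hf)
  have h2 := (H.hasFTaylorSeriesUpToOn s).eq_iteratedFDerivWithin_of_uniqueDiffOn
    (by exact_mod_cast hk) hs hx
  rw [iteratedDerivWithin_eq_iteratedFDerivWithin, iteratedDeriv_eq_iteratedFDeriv, ← h2]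
  rfl

/-- Analytic core of case (ii) of Lemma 3.7 (lem:evalKN): if `g : ℝ × ℝ → ℂ` is
C^{m+2}, vanishes at `y = 0`, and `y ↦ g (q, y)` vanishes to order at least `m`
at `y = −q` for every `q`, then `(∂_y^m g)(q, −q)/q` tends to
`−(1/(m+1))·(∂_y^{m+1} g)(0, 0)` as `q → 0`, `q ≠ 0`. -/
theorem colliding_zeros_limit_higher (m : ℕ) (hm : 1 ≤ m) (g : ℝ × ℝ → ℂ)
    (hg : ContDiff ℝ (m + 2) g)
    (h0 : ∀ q : ℝ, g (q, 0) = 0)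
    (h1 : ∀ q : ℝ, ∀ j : ℕ, j ≤ m - 1 → iteratedDeriv j (fun y : ℝ => g (q, y)) (-q) = 0) :
    Tendsto (fun q : ℝ => (iteratedDeriv m (fun y : ℝ => g (q, y)) (-q)) / (q : ℂ))
      (nhdsWithin 0 {q : ℝ | q ≠ 0})
      (nhds (-(1 / ((m : ℂ) + 1)) * iteratedDeriv (m + 1) (fun y : ℝ => g (0, y)) 0)) := by
  have hg' : ContDiff ℝ ((m + 2 : ℕ) : WithTop ℕ∞) g := by exact_mod_cast hg
  have hIter : ∀ k : ℕ, k ≤ m + 2 → ∀ q y : ℝ,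
      iteratedDeriv k (fun y : ℝ => g (q, y)) y = pdy^[k] g (q, y) := by
    intro k hk q y
    exact iteratedDeriv_slice k (hg'.of_le (by exact_mod_cast hk)) q y
  have hvanish : ∀ (q : ℝ) (k : ℕ), k < m → pdy^[k] g (q, -q) = 0 := by
    intro q k hk
    rw [← hIter k (by omega) q (-q)]
    exact h1 q k (by omega)
  have hgslice : ∀ q : ℝ, ContDiff ℝ ((m + 2 : ℕ) : WithTop ℕ∞) (fun y : ℝ => g (q, y)) :=
    fun q => hg'.comp (contDiff_const.prodMk contDiff_id)
  have hPm1 : Continuous (pdy^[m + 1] g) := by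
    have : ContDiff ℝ ((0 : ℕ) : WithTop ℕ∞) (pdy^[m + 1] g) :=
      contDiff_pdy_iterate (m + 1) (n := 0)
        (hg'.of_le (by exact_mod_cast (by omega : 0 + (m + 1) ≤ m + 2)))
    exact this.continuous
  have hPm2 : Continuous (pdy^[m + 2] g) := by
    have : ContDiff ℝ ((0 : ℕ) : WithTop ℕ∞) (pdy^[m + 2] g) :=
      contDiff_pdy_iterate (m + 2) (n := 0)
        (hg'.of_le (by exact_mod_cast (by omega : 0 + (m + 2) ≤ m + 2)))
    exact this.continuous
  obtain ⟨C, hC⟩ := (isCompact_Icc.prod isCompact_Icc :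
      IsCompact (Set.Icc (-1 : ℝ) 1 ×ˢ Set.Icc (-1 : ℝ) 1)).exists_bound_of_continuousOn
    hPm2.continuousOn
  have hC0 : 0 ≤ C := le_trans (norm_nonneg _)
    (hC (0, 0) (by constructor <;> constructor <;> norm_num))
  -- the key Taylor estimate
  set E : ℝ → ℂ := fun q => ((q : ℂ) ^ m / (m.factorial : ℂ)) * pdy^[m] g (q, -q)
    + ((q : ℂ) ^ (m + 1) / ((m + 1).factorial : ℂ)) * pdy^[m + 1] g (q, -q) with hEdef
  have hscal : ∀ (q : ℝ) (k : ℕ), (k.factorial : ℝ)⁻¹ * (0 - q) ^ k * (-1 : ℝ) ^ k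
      = (k.factorial : ℝ)⁻¹ * q ^ k := by
    intro q k
    rw [mul_assoc, ← mul_pow]
    norm_num
  have key : ∀ q : ℝ, |q| ≤ 1 → ‖E q‖ ≤ C * |q| ^ (m + 2) / ((m + 1).factorial : ℝ) := by
    intro q hq
    rcases lt_trichotomy q 0 with hneg | hzero | hpos
    · -- negative case : use the reflected function
      have hud : UniqueDiffOn ℝ (Set.Icc q 0) := uniqueDiffOn_Icc hneg
      have hcdφ : ContDiff ℝ ((m + 2 : ℕ) : WithTop ℕ∞) (fun t : ℝ => g (q, -t)) :=
        (hgslice q).comp contDiff_neg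
      have hrefl : ∀ (a : ℝ) (k : ℕ), iteratedDeriv k (fun t : ℝ => g (q, -t)) a
          = (-1 : ℝ) ^ k • iteratedDeriv k (fun y : ℝ => g (q, y)) (-a) :=
        fun a k => iteratedDeriv_comp_neg k (fun y : ℝ => g (q, y)) a
      have hbound : ∀ y ∈ Set.Icc q 0,
          ‖iteratedDerivWithin (m + 2) (fun t : ℝ => g (q, -t)) (Set.Icc q 0) y‖ ≤ C := by
        intro y hy
        rw [iteratedDerivWithin_eq_of_contDiff hcdφ hud hy le_rfl, hrefl y (m + 2),
          hIter (m + 2) le_rfl q (-y), norm_smul]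
        have hmem : ((q, -y) : ℝ × ℝ) ∈ Set.Icc (-1 : ℝ) 1 ×ˢ Set.Icc (-1 : ℝ) 1 := by
          obtain ⟨hy1, hy2⟩ := hy
          obtain ⟨ha, hb⟩ := abs_le.mp hq
          simp only [Set.mem_prod, Set.mem_Icc]
          constructor <;> constructor <;> linarith
        simpa using hC (q, -y) hmem
      have htay := taylor_mean_remainder_bound (n := m + 1) (le_of_lt hneg)
        ((hcdφ.of_le (le_of_eq (by norm_cast))).contDiffOn)
        (Set.right_mem_Icc.mpr (le_of_lt hneg)) hbound
      have hsum : ∑ k ∈ Finset.range (m + 1 + 1),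
          ((k.factorial : ℝ)⁻¹ * ((0 : ℝ) - q) ^ k) •
            iteratedDerivWithin k (fun t : ℝ => g (q, -t)) (Set.Icc q 0) q = E q := by
        have hterm : ∀ k ∈ Finset.range (m + 1 + 1),
            ((k.factorial : ℝ)⁻¹ * ((0 : ℝ) - q) ^ k) •
              iteratedDerivWithin k (fun t : ℝ => g (q, -t)) (Set.Icc q 0) q
            = ((k.factorial : ℝ)⁻¹ * q ^ k) • pdy^[k] g (q, -q) := by
          intro k hk
          have hk' : k ≤ m + 2 := by
            have := Finset.mem_range.mp hk; omega
          rw [iteratedDerivWithin_eq_of_contDiff hcdφ hud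
              (Set.left_mem_Icc.mpr (le_of_lt hneg)) hk', hrefl q k, hIter k hk' q (-q),
            smul_smul, hscal q k]
        rw [Finset.sum_congr rfl hterm, Finset.sum_range_succ, Finset.sum_range_succ,
          Finset.sum_eq_zero (fun k hk => by
            rw [hvanish q k (Finset.mem_range.mp hk), smul_zero]), zero_add, hEdef]
        simp only [Complex.real_smul]
        push_cast
        ring
      rw [taylor_within_apply, hsum] at htay
      have habs : |q| = 0 - q := by rw [abs_of_neg hneg]; ring
      have h00 : g (q, -0) = 0 := by rw [neg_zero]; exact h0 q
      calc ‖E q‖ = ‖g (q, -0) - E q‖ := by rw [h00]; simp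
        _ ≤ C * ((0 : ℝ) - q) ^ (m + 1 + 1) / ((m + 1).factorial : ℝ) := htay
        _ = C * |q| ^ (m + 2) / ((m + 1).factorial : ℝ) := by rw [habs]
    · -- zero case
      subst hzero
      have : E 0 = 0 := by
        rw [hEdef]
        simp [zero_pow (by omega : m ≠ 0)]
      rw [this]
      simp only [norm_zero]
      positivity
    · -- positive case
      have hud : UniqueDiffOn ℝ (Set.Icc (-q) 0) := uniqueDiffOn_Icc (by linarith)
      have hbound : ∀ y ∈ Set.Icc (-q) 0,
          ‖iteratedDerivWithin (m + 2) (fun y : ℝ => g (q, y)) (Set.Icc (-q) 0) y‖ ≤ C := by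
        intro y hy
        rw [iteratedDerivWithin_eq_of_contDiff (hgslice q) hud hy le_rfl,
          hIter (m + 2) le_rfl q y]
        have hmem : ((q, y) : ℝ × ℝ) ∈ Set.Icc (-1 : ℝ) 1 ×ˢ Set.Icc (-1 : ℝ) 1 := by
          obtain ⟨hy1, hy2⟩ := hy
          obtain ⟨ha, hb⟩ := abs_le.mp hq
          simp only [Set.mem_prod, Set.mem_Icc]
          constructor <;> constructor <;> linarith
        exact hC (q, y) hmem
      have htay := taylor_mean_remainder_bound (n := m + 1) (by linarith : -q ≤ (0 : ℝ))
        (((hgslice q).of_le (le_of_eq (by norm_cast))).contDiffOn)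
        (Set.right_mem_Icc.mpr (by linarith)) hbound
      have hsum : ∑ k ∈ Finset.range (m + 1 + 1),
          ((k.factorial : ℝ)⁻¹ * ((0 : ℝ) - -q) ^ k) •
            iteratedDerivWithin k (fun y : ℝ => g (q, y)) (Set.Icc (-q) 0) (-q) = E q := by
        have hterm : ∀ k ∈ Finset.range (m + 1 + 1),
            ((k.factorial : ℝ)⁻¹ * ((0 : ℝ) - -q) ^ k) •
              iteratedDerivWithin k (fun y : ℝ => g (q, y)) (Set.Icc (-q) 0) (-q)
            = ((k.factorial : ℝ)⁻¹ * q ^ k) • pdy^[k] g (q, -q) := by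
          intro k hk
          have hk' : k ≤ m + 2 := by
            have := Finset.mem_range.mp hk; omega
          rw [iteratedDerivWithin_eq_of_contDiff (hgslice q) hud
              (Set.left_mem_Icc.mpr (by linarith)) hk', hIter k hk' q (-q)]
          norm_num
        rw [Finset.sum_congr rfl hterm, Finset.sum_range_succ, Finset.sum_range_succ,
          Finset.sum_eq_zero (fun k hk => by
            rw [hvanish q k (Finset.mem_range.mp hk), smul_zero]), zero_add, hEdef]
        simp only [Complex.real_smul]
        push_cast
        ring
      rw [taylor_within_apply, hsum] at htay
      have habs : |q| = 0 - -q := by rw [abs_of_pos hpos]; ring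
      calc ‖E q‖ = ‖g (q, 0) - E q‖ := by rw [h0 q]; simp
        _ ≤ C * ((0 : ℝ) - -q) ^ (m + 1 + 1) / ((m + 1).factorial : ℝ) := htay
        _ = C * |q| ^ (m + 2) / ((m + 1).factorial : ℝ) := by rw [habs]
  -- rewrite the goal through pdy
  have hAeq : ∀ q : ℝ, iteratedDeriv m (fun y : ℝ => g (q, y)) (-q) = pdy^[m] g (q, -q) :=
    fun q => hIter m (by omega) q (-q)
  have hBeq : iteratedDeriv (m + 1) (fun y : ℝ => g (0, y)) 0 = pdy^[m + 1] g (0, -0) := by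
    rw [hIter (m + 1) (by omega) 0 0, neg_zero]
  simp only [hAeq, hBeq]
  have hcontB : Continuous (fun q : ℝ => pdy^[m + 1] g (q, -q)) :=
    hPm1.comp (continuous_id.prodMk continuous_neg)
  have tB : Tendsto (fun q : ℝ => -(1 / ((m : ℂ) + 1)) * pdy^[m + 1] g (q, -q))
      (nhdsWithin 0 {q : ℝ | q ≠ 0}) (nhds (-(1 / ((m : ℂ) + 1)) * pdy^[m + 1] g (0, -0))) :=
    ((continuous_const.mul hcontB).tendsto 0).mono_left nhdsWithin_le_nhds
  have tR : Tendsto (fun q : ℝ => pdy^[m] g (q, -q) / (q : ℂ)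
      + (1 / ((m : ℂ) + 1)) * pdy^[m + 1] g (q, -q))
      (nhdsWithin 0 {q : ℝ | q ≠ 0}) (nhds 0) := by
    apply squeeze_zero_norm'
      (a := fun q : ℝ => ((m.factorial : ℝ) * C / ((m + 1).factorial : ℝ)) * |q|)
    · have h1ball : ∀ᶠ q in nhdsWithin (0 : ℝ) {q : ℝ | q ≠ 0}, |q| ≤ 1 := by
        have h' : ∀ᶠ q in nhds (0 : ℝ), |q| ≤ 1 := by
          have := eventually_abs_sub_lt (0 : ℝ) one_pos
          filter_upwards [this] with q hq
          simp only [sub_zero] at hq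
          linarith
        exact h'.filter_mono nhdsWithin_le_nhds
      filter_upwards [h1ball, self_mem_nhdsWithin] with q hq1 hqne
      have hqne' : q ≠ 0 := hqne
      have hqC : (q : ℂ) ≠ 0 := by exact_mod_cast hqne'
      have hm1 : ((m : ℂ) + 1) ≠ 0 := by
        have : ((m + 1 : ℕ) : ℂ) ≠ 0 := Nat.cast_ne_zero.mpr (Nat.succ_ne_zero m)
        push_cast at this
        exact this
      have hmf : (m.factorial : ℂ) ≠ 0 := by exact_mod_cast m.factorial_ne_zero
      have hmf1 : ((m + 1).factorial : ℂ) ≠ 0 := by exact_mod_cast (m + 1).factorial_ne_zero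
      set D : ℂ := pdy^[m] g (q, -q) / (q : ℂ)
        + (1 / ((m : ℂ) + 1)) * pdy^[m + 1] g (q, -q) with hDdef
      have hfact : ((m + 1).factorial : ℂ) = ((m : ℂ) + 1) * (m.factorial : ℂ) := by
        push_cast [Nat.factorial_succ]
        ring
      have hid : (q : ℂ) ^ (m + 1) * D = (m.factorial : ℂ) * E q := by
        rw [hDdef, hEdef, hfact]
        field_simp
        ring
      have hnorm : |q| ^ (m + 1) * ‖D‖ = (m.factorial : ℝ) * ‖E q‖ := by
        calc |q| ^ (m + 1) * ‖D‖ = ‖(q : ℂ) ^ (m + 1) * D‖ := by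
              rw [norm_mul, norm_pow, Complex.norm_real, Real.norm_eq_abs]
          _ = ‖(m.factorial : ℂ) * E q‖ := by rw [hid]
          _ = (m.factorial : ℝ) * ‖E q‖ := by
              rw [norm_mul, Complex.norm_natCast]
      have habs : (0 : ℝ) < |q| := abs_pos.mpr hqne'
      have hDval : ‖D‖ = (m.factorial : ℝ) * ‖E q‖ / |q| ^ (m + 1) := by
        rw [eq_div_iff (by positivity : |q| ^ (m + 1) ≠ (0 : ℝ))]
        linear_combination hnorm
      rw [hDval, div_le_iff₀ (by positivity)]
      have hrhs : ((m.factorial : ℝ) * C / ((m + 1).factorial : ℝ)) * |q| * |q| ^ (m + 1)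
          = (m.factorial : ℝ) * (C * |q| ^ (m + 2) / ((m + 1).factorial : ℝ)) := by
        have : |q| ^ (m + 2) = |q| ^ (m + 1) * |q| := by ring
        rw [this]
        field_simp
      rw [hrhs]
      exact mul_le_mul_of_nonneg_left (key q hq1) (by positivity)
    · have h' : Tendsto (fun q : ℝ => ((m.factorial : ℝ) * C / ((m + 1).factorial : ℝ)) * |q|)
          (nhds 0) (nhds (((m.factorial : ℝ) * C / ((m + 1).factorial : ℝ)) * |0|)) :=
        (continuous_const.mul continuous_abs).tendsto 0
      simpa using h'.mono_left nhdsWithin_le_nhds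
  have hcomb := tR.add tB
  have heq : (fun q : ℝ => (pdy^[m] g (q, -q) / (q : ℂ)
      + (1 / ((m : ℂ) + 1)) * pdy^[m + 1] g (q, -q))
      + -(1 / ((m : ℂ) + 1)) * pdy^[m + 1] g (q, -q))
      = fun q : ℝ => pdy^[m] g (q, -q) / (q : ℂ) := by
    funext q
    ring
  rw [heq, zero_add] at hcomb
  exact hcomb
end
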